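/- arXiv:0902.2518 — 3 statements merged into one kernel-verified Lean document; each statement's English description precedes it below -/
import Mathlib

section
/- Let t < T be integers, (F_s)_{s=t,...,T} a filtration, and for each s let G_s, q_s, q̂_s be F_s-measurable integrable random variables with q_s = E[θ_{s+1}(q) | F_s], where the cashflow θ is defined recursively by θ_T(q) = G_T and θ_s(q) = G_s·1{q_s ≤ G_s} + θ_{s+1}(q)·1{q_s > G_s} (and analogously θ(q̂) with thresholds q̂_s). Then for every p > 1: ‖E[θ_{t+1}(q) − θ_{t+1}(q̂) | F_t]‖_p ≤ Σ_{s=t+1}^{T} ‖q̂_s − q_s‖_p. -/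
open MeasureTheory Finset

/-- The cashflow `θ_s(q)` generated by the threshold rule `q`:
`θ_T(q) = G_T` and `θ_s(q) = G_s·1{q_s ≤ G_s} + θ_{s+1}(q)·1{q_s > G_s}` for `s < T`. -/
noncomputable def snellCashflow {Ω : Type*} (T : ℕ) (G q : ℕ → Ω → ℝ) : ℕ → Ω → ℝ
  | s => fun ω =>
    if _ : s < T then
      (if q s ω ≤ G s ω then G s ω else snellCashflow T G q (s + 1) ω)
    else G T ω
  termination_by s => T - s
  decreasing_by omega


lemma snell_of_lt {Ω : Type*} {T : ℕ} {G q : ℕ → Ω → ℝ} {s : ℕ} (h : s < T) :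
    snellCashflow T G q s = fun ω =>
      if q s ω ≤ G s ω then G s ω else snellCashflow T G q (s + 1) ω := by
  rw [snellCashflow]; simp [h]

lemma snell_of_ge {Ω : Type*} {T : ℕ} {G q : ℕ → Ω → ℝ} {s : ℕ} (h : ¬ s < T) :
    snellCashflow T G q s = G T := by
  rw [snellCashflow]; simp [h]

lemma snell_sm {Ω : Type*} {T : ℕ} {ℱ : ℕ → MeasurableSpace Ω} (hmono : Monotone ℱ)
    {G q : ℕ → Ω → ℝ} (hG : ∀ s, StronglyMeasurable[ℱ s] (G s))
    (hq : ∀ s, StronglyMeasurable[ℱ s] (q s)) (s : ℕ) :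
    StronglyMeasurable[ℱ T] (snellCashflow T G q s) := by
  by_cases h : s < T
  · rw [snell_of_lt h]
    have hA : MeasurableSet[ℱ T] {ω | q s ω ≤ G s ω} := by
      exact measurableSet_le ((hq s).mono (hmono h.le)).measurable
        ((hG s).mono (hmono h.le)).measurable
    exact StronglyMeasurable.ite hA ((hG s).mono (hmono h.le)) (snell_sm hmono hG hq (s + 1))
  · rw [snell_of_ge h]; exact hG T
  termination_by T - s
  decreasing_by omega

lemma snell_int {Ω : Type*} {mΩ : MeasurableSpace Ω} {μ : Measure Ω}
    {T : ℕ} {ℱ : ℕ → MeasurableSpace Ω} (hℱ : ∀ s, ℱ s ≤ mΩ) (hmono : Monotone ℱ)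
    {G q : ℕ → Ω → ℝ} (hG : ∀ s, StronglyMeasurable[ℱ s] (G s))
    (hq : ∀ s, StronglyMeasurable[ℱ s] (q s))
    (hGint : ∀ s, Integrable (G s) μ) (s : ℕ) :
    Integrable (snellCashflow T G q s) μ := by
  by_cases h : s < T
  · rw [snell_of_lt h]
    have hA : MeasurableSet {ω | q s ω ≤ G s ω} := by
      have : MeasurableSet[ℱ s] {ω | q s ω ≤ G s ω} :=
        measurableSet_le (hq s).measurable (hG s).measurable
      exact hℱ s _ this
    have heq : (fun ω => if q s ω ≤ G s ω then G s ω else snellCashflow T G q (s + 1) ω)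
        = Set.piecewise {ω | q s ω ≤ G s ω} (G s) (snellCashflow T G q (s + 1)) := by
      ext ω; simp [Set.piecewise, Set.mem_setOf_eq]
    rw [heq]
    exact Integrable.piecewise hA (hGint s).integrableOn
      (snell_int hℱ hmono hG hq hGint (s + 1)).integrableOn
  · rw [snell_of_ge h]; exact hGint T
  termination_by T - s
  decreasing_by omega

lemma indicator_diff_abs (a b c : ℝ) :
    |((if b ≤ a then (1:ℝ) else 0) - (if c ≤ a then 1 else 0)) * (a - b)| ≤ |c - b| := by
  by_cases h1 : b ≤ a <;> by_cases h2 : c ≤ a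
  · simp [h1, h2, abs_nonneg]
  · push_neg at h2
    rw [if_pos h1, if_neg (not_le.mpr h2), sub_zero, one_mul,
      abs_of_nonneg (by linarith), abs_of_pos (by linarith : (0:ℝ) < c - b)]
    linarith
  · push_neg at h1
    rw [if_neg (not_le.mpr h1), if_pos h2, zero_sub, neg_one_mul, neg_sub,
      abs_of_pos (by linarith : (0:ℝ) < b - a),
      abs_of_neg (by linarith : c - b < 0)]
    linarith
  · simp [h1, h2, abs_nonneg]


lemma tangent_rpow {p : ℝ} (hp : 1 ≤ p) {x r : ℝ} (hx : 0 ≤ x) (hr : 0 ≤ r) :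
    p * r ^ (p - 1) * x - (p - 1) * r ^ p ≤ x ^ p := by
  rcases eq_or_lt_of_le hr with hr0 | hr0
  · rcases eq_or_lt_of_le hp with hp1 | hp1
    · simp [← hr0, ← hp1, Real.rpow_one]
    · rw [← hr0]
      rw [Real.zero_rpow (by linarith : p - 1 ≠ 0), Real.zero_rpow (by linarith : p ≠ 0)]
      simpa using Real.rpow_nonneg hx p
  · have hs : -1 ≤ x / r - 1 := by
      have : 0 ≤ x / r := div_nonneg hx hr0.le
      linarith
    have hB := one_add_mul_self_le_rpow_one_add hs hp
    have h1 : 1 + (x / r - 1) = x / r := by ring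
    rw [h1] at hB
    have h2 : (x / r) ^ p = x ^ p / r ^ p := Real.div_rpow hx hr0.le p
    rw [h2] at hB
    have hrp : 0 < r ^ p := Real.rpow_pos_of_pos hr0 p
    have h3 : r ^ (p - 1) = r ^ p / r := by
      rw [Real.rpow_sub_one (ne_of_gt hr0)]
    have hmul := mul_le_mul_of_nonneg_left hB hrp.le
    have he1 : r ^ p * (x ^ p / r ^ p) = x ^ p := by field_simp
    have he2 : r ^ p * (1 + p * (x / r - 1)) = p * r ^ (p - 1) * x - (p - 1) * r ^ p := by
      rw [h3]; field_simp; ring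
    rw [he1, he2] at hmul
    exact hmul

lemma eLpNorm_condexp_le_my {Ω : Type*} {mΩ : MeasurableSpace Ω} {μ : Measure Ω}
    [IsProbabilityMeasure μ] {m : MeasurableSpace Ω} (hm : m ≤ mΩ) (f : Ω → ℝ)
    {p : ℝ} (hp : 1 ≤ p) :
    eLpNorm (μ[f|m]) (ENNReal.ofReal p) μ ≤ eLpNorm f (ENNReal.ofReal p) μ := by
  by_cases hfi : Integrable f μ
  swap
  · rw [condExp_of_not_integrable hfi]; simp
  by_cases htop : eLpNorm f (ENNReal.ofReal p) μ = ⊤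
  · rw [htop]; exact le_top
  have hp0 : (0:ℝ) < p := by linarith
  have hP0 : (ENNReal.ofReal p) ≠ 0 := by
    simp only [ne_eq, ENNReal.ofReal_eq_zero, not_le]; linarith
  have hPtop : (ENNReal.ofReal p) ≠ ⊤ := ENNReal.ofReal_ne_top
  have hPr : (ENNReal.ofReal p).toReal = p := ENNReal.toReal_ofReal hp0.le
  have hmem : MemLp f (ENNReal.ofReal p) μ :=
    ⟨hfi.aestronglyMeasurable, lt_top_iff_ne_top.2 htop⟩
  set F : Ω → ℝ := fun ω => |f ω| with hF
  have hFi : Integrable F μ := hfi.abs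
  have hFp_int : Integrable (fun ω => F ω ^ p) μ := by
    have := hmem.integrable_norm_rpow hP0 hPtop
    simpa [hPr, Real.norm_eq_abs, hF] using this
  set g := μ[f|m] with hg
  set gA := μ[F|m] with hgA
  have habs : ∀ᵐ ω ∂μ, |g ω| ≤ gA ω := by
    have h1 : g ≤ᵐ[μ] gA := condExp_mono hfi hFi
      (Filter.Eventually.of_forall fun ω => le_abs_self _)
    have h2 : μ[-f|m] ≤ᵐ[μ] gA := condExp_mono hfi.neg hFi
      (Filter.Eventually.of_forall fun ω => neg_le_abs _)
    have h3 := condExp_neg (μ := μ) (m := m) f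
    filter_upwards [h1, h2, h3] with ω e1 e2 e3
    rw [abs_le]
    refine ⟨?_, e1⟩
    have h4 : -(g ω) ≤ gA ω := by
      have : (μ[-f|m]) ω = -(g ω) := by rw [e3]; simp [hg]
      linarith [this ▸ e2]
    linarith
  have hgA0 : 0 ≤ᵐ[μ] gA := condExp_nonneg
    (Filter.Eventually.of_forall fun ω => abs_nonneg _)
  have hCp0 : 0 ≤ᵐ[μ] μ[fun ω => F ω ^ p|m] := condExp_nonneg
    (Filter.Eventually.of_forall fun ω => Real.rpow_nonneg (abs_nonneg _) p)
  have hkey : ∀ᵐ ω ∂μ, gA ω ^ p ≤ (μ[fun ω => F ω ^ p|m]) ω := by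
    have hrat : ∀ r : ℚ, 0 ≤ (r:ℝ) → ∀ᵐ ω ∂μ,
        p * (r:ℝ) ^ (p - 1) * gA ω - (p - 1) * (r:ℝ) ^ p ≤ (μ[fun ω => F ω ^ p|m]) ω := by
      intro r hr
      set c : ℝ := p * (r:ℝ) ^ (p - 1) with hc
      set d : ℝ := (p - 1) * (r:ℝ) ^ p with hd
      have hpt : (fun ω => c * F ω - d) ≤ᵐ[μ] (fun ω => F ω ^ p) :=
        Filter.Eventually.of_forall fun ω => by
          have := tangent_rpow hp (abs_nonneg (f ω)) hr
          simpa [hc, hd, hF, mul_comm, mul_assoc, mul_left_comm] using this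
      have hint : Integrable (fun ω => c * F ω - d) μ :=
        (hFi.const_mul c).sub (integrable_const d)
      have hmono := condExp_mono (m := m) hint hFp_int hpt
      have heq : μ[fun ω => c * F ω - d|m] =ᵐ[μ] fun ω => c * gA ω - d := by
        have h1 := condExp_sub (μ := μ) (m := m) (hFi.const_mul c) (integrable_const d)
        have h2 := condExp_smul (μ := μ) (m := m) c F
        have h3 := condExp_const hm d (μ := μ)
        have h4 : (fun ω => c * F ω - d) = (c • F) - (fun _ : Ω => d) := by
          funext ω; simp [smul_eq_mul]
        rw [h4]
        refine (condExp_sub ?_ (integrable_const d) m).trans ?_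
        · exact hFi.smul c
        filter_upwards [h2] with ω e2
        simp only [Pi.sub_apply, h3, e2, Pi.smul_apply, smul_eq_mul]; rfl
      filter_upwards [hmono, heq] with ω e1 e2
      have : (fun ω => c * F ω - d) ≤ᵐ[μ] (fun ω => F ω ^ p) := hpt
      calc p * (r:ℝ) ^ (p - 1) * gA ω - (p - 1) * (r:ℝ) ^ p = c * gA ω - d := rfl
        _ = (μ[fun ω => c * F ω - d|m]) ω := e2.symm
        _ ≤ (μ[fun ω => F ω ^ p|m]) ω := e1
    have hall : ∀ᵐ ω ∂μ, ∀ r : ℚ, 0 ≤ (r:ℝ) →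
        p * (r:ℝ) ^ (p - 1) * gA ω - (p - 1) * (r:ℝ) ^ p ≤ (μ[fun ω => F ω ^ p|m]) ω := by
      rw [MeasureTheory.ae_all_iff]
      intro r
      by_cases hr : 0 ≤ (r:ℝ)
      · filter_upwards [hrat r hr] with ω e _; exact e
      · filter_upwards with ω hr'; exact absurd hr' hr
    filter_upwards [hall, hgA0] with ω hω hω0
    simp only [Pi.zero_apply] at hω0
    set x := gA ω with hx
    set R := (μ[fun ω => F ω ^ p|m]) ω with hR
    rcases eq_or_lt_of_le hω0 with h0 | h0
    · rw [← h0, Real.zero_rpow (by linarith : p ≠ 0)]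
      have h00 := hω 0 (by norm_num)
      rcases eq_or_lt_of_le hp with hp1 | hp1
      · simpa [← hp1, ← h0] using h00
      · simpa [← h0, Real.zero_rpow (by linarith : p - 1 ≠ 0),
          Real.zero_rpow (by linarith : p ≠ 0)] using h00
    · -- x > 0
      have hmaxlt : ∀ n : ℕ, max (x/2) (x - 1/(n+1)) < x := fun n => by
        apply max_lt (by linarith)
        have : (0:ℝ) < 1/(n+1) := by positivity
        linarith
      choose u hu1 hu2 using fun n : ℕ => exists_rat_btwn (hmaxlt n)
      have hlo : Filter.Tendsto (fun n : ℕ => max (x/2) (x - 1/(n+1))) Filter.atTop (nhds x) := by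
        have h5 : Filter.Tendsto (fun n : ℕ => x - 1/((n:ℝ)+1)) Filter.atTop (nhds (x - 0)) :=
          Filter.Tendsto.const_sub x tendsto_one_div_add_atTop_nhds_zero_nat
        rw [sub_zero] at h5
        have h6 := (tendsto_const_nhds (x := x/2) (f := Filter.atTop (α := ℕ))).max h5
        rwa [max_eq_right (by linarith : x/2 ≤ x)] at h6
      have htend : Filter.Tendsto (fun n : ℕ => ((u n : ℝ))) Filter.atTop (nhds x) :=
        tendsto_of_tendsto_of_tendsto_of_le_of_le hlo tendsto_const_nhds
          (fun n => (hu1 n).le) (fun n => (hu2 n).le)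
      have hcont : ContinuousAt (fun r : ℝ => p * r ^ (p - 1) * x - (p - 1) * r ^ p) x := by
        have h1 : ContinuousAt (fun r : ℝ => r ^ (p - 1)) x :=
          Real.continuousAt_rpow_const x (p-1) (Or.inl (ne_of_gt h0))
        have h2 : ContinuousAt (fun r : ℝ => r ^ p) x :=
          Real.continuousAt_rpow_const x p (Or.inl (ne_of_gt h0))
        exact ((continuousAt_const.mul h1).mul continuousAt_const).sub
          (continuousAt_const.mul h2)
      have hφx : p * x ^ (p - 1) * x - (p - 1) * x ^ p = x ^ p := by
        have : x ^ (p - 1) * x = x ^ p := by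
          rw [Real.rpow_sub_one (ne_of_gt h0)]
          field_simp
        nlinarith [this]
      have hcomp : Filter.Tendsto (fun n => p * ((u n : ℝ)) ^ (p - 1) * x
          - (p - 1) * ((u n : ℝ)) ^ p) Filter.atTop (nhds (x ^ p)) := by
        have := hcont.tendsto.comp htend
        rwa [Function.comp_def, hφx] at this
      refine le_of_tendsto hcomp ?_
      filter_upwards with n
      refine hω (u n) ?_
      have := hu1 n
      have : x/2 < ((u n : ℝ)) := lt_of_le_of_lt (le_max_left _ _) this
      linarith
  -- conclude
  have hfinal : ∀ᵐ ω ∂μ, |g ω| ^ p ≤ (μ[fun ω => F ω ^ p|m]) ω := by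
    filter_upwards [habs, hkey, hgA0] with ω e1 e2 e3
    exact le_trans (Real.rpow_le_rpow (abs_nonneg _) e1 hp0.le) e2
  rw [eLpNorm_eq_lintegral_rpow_enorm_toReal hP0 hPtop, eLpNorm_eq_lintegral_rpow_enorm_toReal hP0 hPtop, hPr]
  apply ENNReal.rpow_le_rpow _ (by positivity)
  have hgconv : ∀ h : Ω → ℝ, (fun ω => (‖h ω‖ₑ) ^ p)
      = fun ω => ENNReal.ofReal (|h ω| ^ p) := by
    intro h; funext ω
    rw [← ofReal_norm, Real.norm_eq_abs,
      ← ENNReal.ofReal_rpow_of_nonneg (abs_nonneg _) hp0.le]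
  rw [hgconv g, hgconv f]
  calc ∫⁻ ω, ENNReal.ofReal (|g ω| ^ p) ∂μ
      ≤ ∫⁻ ω, ENNReal.ofReal ((μ[fun ω => F ω ^ p|m]) ω) ∂μ := by
        refine lintegral_mono_ae ?_
        filter_upwards [hfinal] with ω e
        exact ENNReal.ofReal_le_ofReal e
    _ = ENNReal.ofReal (∫ ω, (μ[fun ω => F ω ^ p|m]) ω ∂μ) :=
        (ofReal_integral_eq_lintegral_ofReal integrable_condExp hCp0).symm
    _ = ENNReal.ofReal (∫ ω, F ω ^ p ∂μ) := by rw [integral_condExp hm]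
    _ = ∫⁻ ω, ENNReal.ofReal (F ω ^ p) ∂μ :=
        ofReal_integral_eq_lintegral_ofReal hFp_int
          (Filter.Eventually.of_forall fun ω => Real.rpow_nonneg (abs_nonneg _) p)
    _ = ∫⁻ ω, ENNReal.ofReal (|f ω| ^ p) ∂μ := rfl

lemma snell_key {Ω : Type*} {mΩ : MeasurableSpace Ω} {μ : Measure Ω} [IsProbabilityMeasure μ]
    (T : ℕ) (ℱ : ℕ → MeasurableSpace Ω) (hℱ : ∀ s, ℱ s ≤ mΩ) (hmono : Monotone ℱ)
    (G q qhat : ℕ → Ω → ℝ)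
    (hGmeas : ∀ s, StronglyMeasurable[ℱ s] (G s))
    (hqmeas : ∀ s, StronglyMeasurable[ℱ s] (q s))
    (hqhatmeas : ∀ s, StronglyMeasurable[ℱ s] (qhat s))
    (hGint : ∀ s, Integrable (G s) μ)
    (hq : ∀ s ≤ T, q s =ᵐ[μ] μ[snellCashflow T G q (s + 1) | ℱ s])
    {p : ℝ} (hp : 1 ≤ p) (s : ℕ) (hs : s ≤ T)
    (hqint : ∀ s, Integrable (q s) μ) :
    eLpNorm (μ[fun ω => snellCashflow T G q s ω - snellCashflow T G qhat s ω | ℱ s])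
        (ENNReal.ofReal p) μ
      ≤ ∑ u ∈ Finset.Icc s T, eLpNorm (fun ω => qhat u ω - q u ω) (ENNReal.ofReal p) μ := by
  have hP1 : 1 ≤ ENNReal.ofReal p := by
    rw [← ENNReal.ofReal_one]; exact ENNReal.ofReal_le_ofReal hp
  by_cases h : s < T
  swap
  · -- s = T
    have hfn : (fun ω => snellCashflow T G q s ω - snellCashflow T G qhat s ω)
        = (0 : Ω → ℝ) := by
      funext ω; rw [snell_of_ge h, snell_of_ge h]; simp
    rw [hfn, condExp_zero, eLpNorm_zero]
    exact zero_le
  · -- s < T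
    set θq := snellCashflow T G q with hθq
    set θh := snellCashflow T G qhat with hθh
    have hθq1 : Integrable (θq (s+1)) μ := snell_int hℱ hmono hGmeas hqmeas hGint (s+1)
    have hθh1 : Integrable (θh (s+1)) μ := snell_int hℱ hmono hGmeas hqhatmeas hGint (s+1)
    set χd : Ω → ℝ := fun ω => (if q s ω ≤ G s ω then (1:ℝ) else 0)
      - (if qhat s ω ≤ G s ω then 1 else 0) with hχd
    set χB : Ω → ℝ := fun ω => if qhat s ω ≤ G s ω then (0:ℝ) else 1 with hχB
    have hχd_sm : StronglyMeasurable[ℱ s] χd := by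
      apply StronglyMeasurable.sub
      · exact ((Measurable.ite (measurableSet_le (hqmeas s).measurable (hGmeas s).measurable)
          measurable_const measurable_const)).stronglyMeasurable
      · exact ((Measurable.ite (measurableSet_le (hqhatmeas s).measurable (hGmeas s).measurable)
          measurable_const measurable_const)).stronglyMeasurable
    have hχB_sm : StronglyMeasurable[ℱ s] χB :=
      ((Measurable.ite (measurableSet_le (hqhatmeas s).measurable (hGmeas s).measurable)
          measurable_const measurable_const)).stronglyMeasurable
    have hχd_aesm : AEStronglyMeasurable χd μ := (hχd_sm.mono (hℱ s)).aestronglyMeasurable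
    have hχB_aesm : AEStronglyMeasurable χB μ := (hχB_sm.mono (hℱ s)).aestronglyMeasurable
    set f1 : Ω → ℝ := fun ω => χd ω * (G s ω - θq (s+1) ω) with hf1
    set f2 : Ω → ℝ := fun ω => χB ω * (θq (s+1) ω - θh (s+1) ω) with hf2
    have hdecomp : (fun ω => θq s ω - θh s ω) = fun ω => f1 ω + f2 ω := by
      funext ω
      rw [hθq, hθh, snell_of_lt h, snell_of_lt h]
      simp only [hf1, hf2, hχd, hχB]
      by_cases h1 : q s ω ≤ G s ω <;> by_cases h2 : qhat s ω ≤ G s ω <;>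
        simp [h1, h2, hθq, hθh]
    have hf1i : Integrable f1 μ := by
      refine Integrable.bdd_mul ((hGint s).sub hθq1) hχd_aesm (c := 2) (Filter.Eventually.of_forall fun ω => ?_)
      simp only [hχd]
      by_cases h1 : q s ω ≤ G s ω <;> by_cases h2 : qhat s ω ≤ G s ω <;>
        simp [h1, h2]
    have hf2i : Integrable f2 μ := by
      refine Integrable.bdd_mul (hθq1.sub hθh1) hχB_aesm (c := 1) (Filter.Eventually.of_forall fun ω => ?_)
      simp only [hχB]
      by_cases h2 : qhat s ω ≤ G s ω <;> simp [h2]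
    -- conditional expectation computation
    have step1 : μ[fun ω => θq s ω - θh s ω|ℱ s]
        =ᵐ[μ] μ[f1|ℱ s] + μ[f2|ℱ s] := by
      rw [hdecomp]
      exact condExp_add hf1i hf2i (ℱ s)
    have step2 : μ[f1|ℱ s] =ᵐ[μ] fun ω => χd ω * (G s ω - q s ω) := by
      have hmul : μ[f1|ℱ s] =ᵐ[μ] χd * μ[fun ω => G s ω - θq (s+1) ω|ℱ s] :=
        condExp_mul_of_stronglyMeasurable_left hχd_sm hf1i ((hGint s).sub hθq1)
      have hsub : μ[fun ω => G s ω - θq (s+1) ω|ℱ s]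
          =ᵐ[μ] μ[G s|ℱ s] - μ[θq (s+1)|ℱ s] := condExp_sub (hGint s) hθq1 (ℱ s)
      have hGc : μ[G s|ℱ s] = G s := condExp_of_stronglyMeasurable (hℱ s) (hGmeas s) (hGint s)
      have hqc : q s =ᵐ[μ] μ[θq (s+1)|ℱ s] := hq s hs
      filter_upwards [hmul, hsub, hqc] with ω e1 e2 e3
      rw [e1]
      simp only [Pi.mul_apply, Pi.sub_apply] at *
      rw [e2, hGc, ← e3]
    have step3 : μ[f2|ℱ s]
        =ᵐ[μ] χB * μ[fun ω => θq (s+1) ω - θh (s+1) ω|ℱ s] :=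
      condExp_mul_of_stronglyMeasurable_left hχB_sm hf2i (hθq1.sub hθh1)
    have stepAll : μ[fun ω => θq s ω - θh s ω|ℱ s] =ᵐ[μ]
        fun ω => χd ω * (G s ω - q s ω)
          + χB ω * (μ[fun ω => θq (s+1) ω - θh (s+1) ω|ℱ s]) ω := by
      filter_upwards [step1, step2, step3] with ω e1 e2 e3
      rw [e1]
      simp only [Pi.add_apply, Pi.mul_apply] at *
      rw [e2, e3]
    rw [eLpNorm_congr_ae stepAll]
    -- triangle inequality
    have haesm1 : AEStronglyMeasurable (fun ω => χd ω * (G s ω - q s ω)) μ :=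
      hχd_aesm.mul ((hGint s).sub (hqint s)).aestronglyMeasurable
    have haesm2 : AEStronglyMeasurable
        (fun ω => χB ω * (μ[fun ω => θq (s+1) ω - θh (s+1) ω|ℱ s]) ω) μ :=
      hχB_aesm.mul (stronglyMeasurable_condExp.mono (hℱ s)).aestronglyMeasurable
    refine le_trans (eLpNorm_add_le haesm1 haesm2 hP1) ?_
    -- sum split
    have hsplit : Finset.Icc s T = insert s (Finset.Icc (s+1) T) := by
      ext k; simp only [Finset.mem_Icc, Finset.mem_insert]; omega
    rw [hsplit, Finset.sum_insert (by simp [Finset.mem_Icc])]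
    refine add_le_add ?_ ?_
    · -- first term
      refine eLpNorm_mono_ae ?_
      filter_upwards with ω
      simp only [Real.norm_eq_abs, hχd]
      exact indicator_diff_abs (G s ω) (q s ω) (qhat s ω)
    · -- second term
      have hb1 : eLpNorm (fun ω => χB ω * (μ[fun ω => θq (s+1) ω - θh (s+1) ω|ℱ s]) ω)
          (ENNReal.ofReal p) μ
          ≤ eLpNorm (μ[fun ω => θq (s+1) ω - θh (s+1) ω|ℱ s]) (ENNReal.ofReal p) μ := by
        refine eLpNorm_mono_ae ?_
        filter_upwards with ω
        simp only [Real.norm_eq_abs, abs_mul, hχB]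
        by_cases h2 : qhat s ω ≤ G s ω <;> simp [h2, abs_nonneg]
      have hb2 : eLpNorm (μ[fun ω => θq (s+1) ω - θh (s+1) ω|ℱ s]) (ENNReal.ofReal p) μ
          ≤ eLpNorm (μ[fun ω => θq (s+1) ω - θh (s+1) ω|ℱ (s+1)]) (ENNReal.ofReal p) μ := by
        have htower := condExp_condExp_of_le (μ := μ)
          (f := fun ω => θq (s+1) ω - θh (s+1) ω)
          (hmono (Nat.le_succ s)) (hℱ (s+1))
        rw [eLpNorm_congr_ae htower.symm]
        exact eLpNorm_condexp_le_my (hℱ s) _ hp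
      refine le_trans hb1 (le_trans hb2 ?_)
      exact snell_key T ℱ hℱ hmono G q qhat hGmeas hqmeas hqhatmeas hGint hq hp (s+1) h hqint
  termination_by T - s
  decreasing_by omega

/-- Lemma scE-4 (error propagation for threshold stopping rules): if `q` is the true
continuation-value process, `q_s = E[θ_{s+1}(q) | F_s]`, and `q̂` an arbitrary adapted
threshold process, then for every `p > 1`,
`‖E[θ_{t+1}(q) − θ_{t+1}(q̂) | F_t]‖_p ≤ Σ_{s=t+1}^T ‖q̂_s − q_s‖_p`. -/
theorem cashflow_error_propagation
    {Ω : Type*} {mΩ : MeasurableSpace Ω} {μ : Measure Ω} [IsProbabilityMeasure μ]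
    (T t : ℕ) (htT : t < T)
    (ℱ : ℕ → MeasurableSpace Ω) (hℱ : ∀ s, ℱ s ≤ mΩ) (hmono : Monotone ℱ)
    (G q qhat : ℕ → Ω → ℝ)
    (hGmeas : ∀ s, StronglyMeasurable[ℱ s] (G s))
    (hqmeas : ∀ s, StronglyMeasurable[ℱ s] (q s))
    (hqhatmeas : ∀ s, StronglyMeasurable[ℱ s] (qhat s))
    (hGint : ∀ s, Integrable (G s) μ)
    (hqint : ∀ s, Integrable (q s) μ) (hqhatint : ∀ s, Integrable (qhat s) μ)
    (hq : ∀ s ≤ T, q s =ᵐ[μ] μ[snellCashflow T G q (s + 1) | ℱ s]) :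
    ∀ p : ℝ, 1 < p →
      eLpNorm (μ[fun ω => snellCashflow T G q (t + 1) ω
            - snellCashflow T G qhat (t + 1) ω | ℱ t]) (ENNReal.ofReal p) μ
        ≤ ∑ s ∈ Finset.Icc (t + 1) T,
            eLpNorm (fun ω => qhat s ω - q s ω) (ENNReal.ofReal p) μ := by
  intro p hp
  have htower := condExp_condExp_of_le (μ := μ)
    (f := fun ω => snellCashflow T G q (t+1) ω - snellCashflow T G qhat (t+1) ω)
    (hmono (Nat.le_succ t)) (hℱ (t+1))
  rw [eLpNorm_congr_ae htower.symm]
  refine le_trans (eLpNorm_condexp_le_my (hℱ t) _ hp.le) ?_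
  exact snell_key T ℱ hℱ hmono G q qhat hGmeas hqmeas hqhatmeas hGint hq hp.le
    (t+1) htT hqint
end

section
/- Let (F_t)_{t=0,...,T} be a discrete filtration, (G_t) adapted and integrable, q = (q_t) the true continuation values with q_t = E[θ_{t+1}(q)|F_t], where θ_t(q) = Σ_{s=t}^T G_s · 1{q_t > G_t, …, q_{s−1} > G_{s−1}, q_s ≤ G_s} (with θ_T = G_T). Then for any adapted threshold process q' (defining a stopping rule τ' via τ'_t = min{s ≥ t : q'_s ≤ G_s}), E[θ_t(q')] ≤ E[θ_t(q)], i.e., the cashflow generated by the true continuation-value thresholds is optimal among all threshold stopping rules. -/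
open MeasureTheory

section aux
variable {Ω : Type*} {mΩ : MeasurableSpace Ω} {μ : Measure Ω} [IsProbabilityMeasure μ]
  {ℱ : ℕ → MeasurableSpace Ω} {T : ℕ} {G p : ℕ → Ω → ℝ}

lemma snell_lt {s : ℕ} (h : s < T) :
    snellCashflow T G p s =
      Set.piecewise {ω | p s ω ≤ G s ω} (G s) (snellCashflow T G p (s+1)) := by
  funext ω
  rw [snellCashflow]
  simp [h, Set.piecewise]

lemma snell_ge {s : ℕ} (h : ¬ s < T) : snellCashflow T G p s = G T := by
  funext ω; rw [snellCashflow]; simp [h]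

omit [IsProbabilityMeasure μ] in
lemma snell_set_meas (hG : ∀ s, StronglyMeasurable[ℱ s] (G s))
    (hp : ∀ s, StronglyMeasurable[ℱ s] (p s)) (s : ℕ) :
    MeasurableSet[ℱ s] {ω | p s ω ≤ G s ω} :=
  measurableSet_le (hp s).measurable (hG s).measurable

omit [IsProbabilityMeasure μ] in
lemma snell_meas (hℱ : ∀ s, ℱ s ≤ mΩ)
    (hG : ∀ s, StronglyMeasurable[ℱ s] (G s))
    (hp : ∀ s, StronglyMeasurable[ℱ s] (p s)) :
    ∀ d s, T ≤ s + d → StronglyMeasurable[mΩ] (snellCashflow T G p s) := by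
  intro d
  induction d with
  | zero => intro s hs; rw [snell_ge (by omega)]; exact (hG T).mono (hℱ T)
  | succ d ih =>
    intro s hs
    by_cases h : s < T
    · rw [snell_lt h]
      exact StronglyMeasurable.piecewise (hℱ s _ (snell_set_meas hG hp s))
        ((hG s).mono (hℱ s)) (ih (s+1) (by omega))
    · rw [snell_ge h]; exact (hG T).mono (hℱ T)

omit [IsProbabilityMeasure μ] in
lemma snell_int_s11 (hℱ : ∀ s, ℱ s ≤ mΩ)
    (hG : ∀ s, StronglyMeasurable[ℱ s] (G s))
    (hp : ∀ s, StronglyMeasurable[ℱ s] (p s))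
    (hGint : ∀ s, Integrable (G s) μ) :
    ∀ d s, T ≤ s + d → Integrable (snellCashflow T G p s) μ := by
  intro d
  induction d with
  | zero => intro s hs; rw [snell_ge (by omega)]; exact hGint T
  | succ d ih =>
    intro s hs
    by_cases h : s < T
    · rw [snell_lt h]
      exact Integrable.piecewise (hℱ s _ (snell_set_meas hG hp s))
        (hGint s).integrableOn (ih (s+1) (by omega)).integrableOn
    · rw [snell_ge h]; exact hGint T

omit [IsProbabilityMeasure μ] in
lemma condexp_piecewise [SigmaFinite μ] {m : MeasurableSpace Ω} (hm : m ≤ mΩ)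
    {A : Set Ω} [∀ ω, Decidable (ω ∈ A)]
    (hA : MeasurableSet[m] A) {f g : Ω → ℝ}
    (hf : Integrable f μ) (hg : Integrable g μ) :
    μ[Set.piecewise A f g | m] =ᵐ[μ] Set.piecewise A (μ[f|m]) (μ[g|m]) := by
  letI : MeasurableSpace Ω := mΩ
  have hAm : MeasurableSet[mΩ] A := hm _ hA
  have hAcm : MeasurableSet[mΩ] Aᶜ := hAm.compl
  have hrw : Set.piecewise A f g = A.indicator f + Aᶜ.indicator g := by
    funext ω
    by_cases hω : ω ∈ A <;>
      simp [Set.piecewise, Set.indicator, hω]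
  rw [hrw]
  have h1 : μ[A.indicator f | m] =ᵐ[μ] A.indicator (μ[f|m]) := condExp_indicator hf hA
  have h2 : μ[Aᶜ.indicator g | m] =ᵐ[μ] Aᶜ.indicator (μ[g|m]) := condExp_indicator hg hA.compl
  have hfA : Integrable (A.indicator f) μ := hf.indicator hAm
  have hgA : Integrable (Aᶜ.indicator g) μ := hg.indicator hAcm
  have h3 : μ[A.indicator f + Aᶜ.indicator g | m] =ᵐ[μ]
      μ[A.indicator f | m] + μ[Aᶜ.indicator g | m] := condExp_add hfA hgA m
  refine h3.trans ((h1.add h2).trans ?_)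
  filter_upwards with ω
  by_cases hω : ω ∈ A <;>
    simp [Set.piecewise, Set.indicator, hω]

end aux

/-- Optimality of the true continuation-value thresholds: if `q` satisfies the
dynamic-programming relation `q_s = E[θ_{s+1}(q) | F_s]`, then the expected cashflow from
the threshold rule `q` dominates that of any other adapted threshold process `q'`:
`E[θ_t(q')] ≤ E[θ_t(q)]`. -/
theorem true_threshold_cashflow_optimal
    {Ω : Type*} {mΩ : MeasurableSpace Ω} (μ : Measure Ω) [IsProbabilityMeasure μ]
    (ℱ : ℕ → MeasurableSpace Ω) (hℱ : ∀ s, ℱ s ≤ mΩ) (hmono : Monotone ℱ)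
    (T t : ℕ) (htT : t ≤ T) (G q q' : ℕ → Ω → ℝ)
    (hGmeas : ∀ s, StronglyMeasurable[ℱ s] (G s))
    (hqmeas : ∀ s, StronglyMeasurable[ℱ s] (q s))
    (hq'meas : ∀ s, StronglyMeasurable[ℱ s] (q' s))
    (hGint : ∀ s, Integrable (G s) μ) (hqint : ∀ s, Integrable (q s) μ)
    (hq : ∀ s ≤ T, q s =ᵐ[μ] μ[snellCashflow T G q (s + 1) | ℱ s]) :
    (∫ ω, snellCashflow T G q' t ω ∂μ) ≤ ∫ ω, snellCashflow T G q t ω ∂μ := by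
  -- integrability facts
  have hθint : ∀ s, Integrable (snellCashflow T G q s) μ := fun s =>
    snell_int_s11 hℱ hGmeas hqmeas hGint (T - s + 1) s (by omega)
  have hθ'int : ∀ s, Integrable (snellCashflow T G q' s) μ := fun s =>
    snell_int_s11 hℱ hGmeas hq'meas hGint (T - s + 1) s (by omega)
  have hmaxint : ∀ s, Integrable (fun ω => max (G s ω) (q s ω)) μ := fun s =>
    (hGint s).sup (hqint s)
  -- the key backward induction
  have key : ∀ d s, s ≤ T → T - s ≤ d →
      (μ[snellCashflow T G q s | ℱ s] =ᵐ[μ] fun ω => max (G s ω) (q s ω)) ∧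
      (μ[snellCashflow T G q' s | ℱ s] ≤ᵐ[μ] fun ω => max (G s ω) (q s ω)) := by
    intro d
    induction d with
    | zero =>
      intro s hsT hd
      have hsT' : s = T := by omega
      subst hsT'
      have hθT : snellCashflow s G q s = G s := snell_ge (lt_irrefl s)
      have hθ'T : snellCashflow s G q' s = G s := snell_ge (lt_irrefl s)
      have hGce : μ[G s | ℱ s] = G s :=
        condExp_of_stronglyMeasurable (hℱ s) (hGmeas s) (hGint s)
      have hce : μ[snellCashflow s G q s | ℱ s] =ᵐ[μ] G s := by
        rw [hθT, hGce]
      have hqT : q s =ᵐ[μ] G s := by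
        refine (hq s le_rfl).trans ?_
        rw [snell_ge (by omega), hGce]
      constructor
      · filter_upwards [hce, hqT] with ω h1 h2
        simp [h1, h2]
      · have hce' : μ[snellCashflow s G q' s | ℱ s] =ᵐ[μ] G s := by
          rw [hθ'T, hGce]
        filter_upwards [hce', hqT] with ω h1 h2
        simp [h1, h2]
    | succ d ih =>
      intro s hsT hd
      by_cases hlt : s < T
      swap
      · exact ih s hsT (by omega)
      obtain ⟨ih1, ih2⟩ := ih (s+1) (by omega) (by omega)
      have hA := snell_set_meas (ℱ := ℱ) hGmeas hqmeas s
      have hA' := snell_set_meas (ℱ := ℱ) hGmeas hq'meas s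
      have hqs := hq s hsT
      -- μ[max(G_{s+1},q_{s+1}) | ℱ s] =ᵐ q s
      have hmaxcond : (μ[(fun ω => max (G (s+1) ω) (q (s+1) ω)) | ℱ s]) =ᵐ[μ] q s := by
        have e1 : (μ[(fun ω => max (G (s+1) ω) (q (s+1) ω)) | ℱ s]) =ᵐ[μ]
            μ[μ[snellCashflow T G q (s+1) | ℱ (s+1)] | ℱ s] :=
          condExp_congr_ae ih1.symm
        have e2 : μ[μ[snellCashflow T G q (s+1) | ℱ (s+1)] | ℱ s] =ᵐ[μ]
            μ[snellCashflow T G q (s+1) | ℱ s] :=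
          condExp_condExp_of_le (hmono (Nat.le_succ s)) (hℱ (s+1))
        exact e1.trans (e2.trans hqs.symm)
      have hGce : μ[G s | ℱ s] = G s :=
        condExp_of_stronglyMeasurable (hℱ s) (hGmeas s) (hGint s)
      constructor
      · -- equality claim for q
        rw [snell_lt hlt]
        refine (condexp_piecewise (hℱ s) hA (hGint s) (hθint (s+1))).trans ?_
        have hθce : μ[snellCashflow T G q (s+1) | ℱ s] =ᵐ[μ] q s := hqs.symm
        filter_upwards [hθce] with ω h2
        by_cases hω : ω ∈ {ω | q s ω ≤ G s ω}
        · simp only [Set.piecewise, hω, if_true, hGce]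
          exact (max_eq_left hω).symm
        · simp only [Set.piecewise, hω, if_false, h2]
          have hlt' : G s ω < q s ω := lt_of_not_ge hω
          exact (max_eq_right hlt'.le).symm
      · -- inequality claim for q'
        rw [snell_lt hlt]
        have hmono' : μ[snellCashflow T G q' (s+1) | ℱ s] ≤ᵐ[μ] q s := by
          have e2 : μ[μ[snellCashflow T G q' (s+1) | ℱ (s+1)] | ℱ s] =ᵐ[μ]
              μ[snellCashflow T G q' (s+1) | ℱ s] :=
            condExp_condExp_of_le (hmono (Nat.le_succ s)) (hℱ (s+1))
          have e3 : μ[μ[snellCashflow T G q' (s+1) | ℱ (s+1)] | ℱ s] ≤ᵐ[μ]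
              μ[(fun ω => max (G (s+1) ω) (q (s+1) ω)) | ℱ s] :=
            condExp_mono integrable_condExp (hmaxint (s+1)) ih2
          calc μ[snellCashflow T G q' (s+1) | ℱ s]
              =ᵐ[μ] μ[μ[snellCashflow T G q' (s+1) | ℱ (s+1)] | ℱ s] := e2.symm
            _ ≤ᵐ[μ] μ[(fun ω => max (G (s+1) ω) (q (s+1) ω)) | ℱ s] := e3
            _ =ᵐ[μ] q s := hmaxcond
        refine (condexp_piecewise (hℱ s) hA' (hGint s) (hθ'int (s+1))).le.trans ?_
        filter_upwards [hmono'] with ω h2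
        by_cases hω : ω ∈ {ω | q' s ω ≤ G s ω}
        · simp only [Set.piecewise, hω, if_true, hGce]
          exact le_max_left _ _
        · simp only [Set.piecewise, hω, if_false]
          exact le_trans h2 (le_max_right _ _)
  obtain ⟨k1, k2⟩ := key (T - t) t htT le_rfl
  have i1 : ∫ ω, snellCashflow T G q' t ω ∂μ = ∫ ω, (μ[snellCashflow T G q' t | ℱ t]) ω ∂μ :=
    (integral_condExp (hℱ t)).symm
  have i2 : ∫ ω, (μ[snellCashflow T G q t | ℱ t]) ω ∂μ = ∫ ω, snellCashflow T G q t ω ∂μ :=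
    integral_condExp (hℱ t)
  rw [i1, ← i2]
  have step1 : ∫ ω, (μ[snellCashflow T G q' t | ℱ t]) ω ∂μ
      ≤ ∫ ω, max (G t ω) (q t ω) ∂μ :=
    integral_mono_ae integrable_condExp (hmaxint t) k2
  have step2 : ∫ ω, max (G t ω) (q t ω) ∂μ = ∫ ω, (μ[snellCashflow T G q t | ℱ t]) ω ∂μ :=
    integral_congr_ae k1.symm
  linarith
end

section
/- Let (F_t)_{t=0,...,T} be a discrete filtration, (G_t) adapted and square-integrable, and define recursively the Tsitsiklis–van Roy iterates q_T = 0, q_t = E[max(G_{t+1}, q_{t+1}) | F_t], and perturbed iterates q̂_T = 0, q̂_t satisfying ‖q̂_t − E[max(G_{t+1}, q̂_{t+1}) | F_t]‖₂ ≤ ε_t. Then ‖q̂_t − q_t‖₂ ≤ Σ_{s=t}^{T−1} ε_s. -/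
open MeasureTheory Finset

section Aux
variable {α : Type*} {m m0 : MeasurableSpace α} {μ : Measure α} [IsProbabilityMeasure μ]

lemma condexp_ae_eq_condexpL2' (hm : m ≤ m0) {f : α → ℝ} (hf : MemLp f 2 μ) :
    μ[f|m] =ᵐ[μ] (condExpL2 ℝ ℝ hm (hf.toLp f) : α → ℝ) := by
  refine (ae_eq_condExp_of_forall_setIntegral_eq hm
    (hf.integrable one_le_two)
    (fun s hs hμs => integrableOn_condExpL2_of_measure_ne_top hm hμs.ne _)
    (fun s hs hμs => ?_)
    (aestronglyMeasurable_condExpL2 hm _)).symm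
  rw [integral_condExpL2_eq hm (hf.toLp f) hs hμs.ne]
  exact setIntegral_congr_ae (hm s hs) (hf.coeFn_toLp.mono fun x hx _ => hx)

lemma memℒp_two_condexp (hm : m ≤ m0) {f : α → ℝ} (hf : MemLp f 2 μ) :
    MemLp (μ[f|m]) 2 μ :=
  (Lp.memLp _).ae_eq (condexp_ae_eq_condexpL2' hm hf).symm

lemma eLpNorm_two_condexp_le (hm : m ≤ m0) {f : α → ℝ} (hf : MemLp f 2 μ) :
    eLpNorm (μ[f|m]) 2 μ ≤ eLpNorm f 2 μ := by
  rw [eLpNorm_congr_ae (condexp_ae_eq_condexpL2' hm hf),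
    ← eLpNorm_congr_ae hf.coeFn_toLp]
  exact eLpNorm_condExpL2_le hm _

end Aux

/-- The Tsitsiklis–van Roy backward iterates: `q_T = 0`,
`q_t = E[max(G_{t+1}, q_{t+1}) | F_t]` for `t < T`. -/
noncomputable def tvrIterate {Ω : Type*} [mΩ : MeasurableSpace Ω] (μ : Measure Ω)
    (ℱ : ℕ → MeasurableSpace Ω) (T : ℕ) (G : ℕ → Ω → ℝ) : ℕ → Ω → ℝ
  | t =>
    if _ : t < T then
      μ[fun ω => max (G (t + 1) ω) (tvrIterate μ ℱ T G (t + 1) ω) | ℱ t]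
    else 0
  termination_by t => T - t
  decreasing_by omega

lemma memℒp_tvrIterate {Ω : Type*} {mΩ : MeasurableSpace Ω} (μ : Measure Ω)
    [IsProbabilityMeasure μ] (ℱ : ℕ → MeasurableSpace Ω) (hℱ : ∀ s, ℱ s ≤ mΩ)
    (T : ℕ) (G : ℕ → Ω → ℝ) (hGL2 : ∀ s, MemLp (G s) 2 μ) :
    ∀ t, MemLp (tvrIterate μ ℱ T G t) 2 μ := by
  have key : ∀ n t, T - t ≤ n → MemLp (tvrIterate μ ℱ T G t) 2 μ := by
    intro n
    induction n with
    | zero =>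
      intro t ht
      rw [tvrIterate, dif_neg (by omega)]
      exact MemLp.zero
    | succ n ih =>
      intro t ht
      rw [tvrIterate]
      by_cases h : t < T
      · rw [dif_pos h]
        exact memℒp_two_condexp (hℱ t) ((hGL2 (t + 1)).sup (ih (t + 1) (by omega)))
      · rw [dif_neg h]
        exact MemLp.zero
  exact fun t => key (T - t) t le_rfl

/-- Linear error propagation for the Tsitsiklis–van Roy recursion: if the perturbed
iterates `q̂` satisfy `q̂_T = 0` and
`‖q̂_t − E[max(G_{t+1}, q̂_{t+1}) | F_t]‖₂ ≤ ε_t`, then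
`‖q̂_t − q_t‖₂ ≤ Σ_{s=t}^{T−1} ε_s`. -/
theorem tvr_linear_error_propagation
    {Ω : Type*} {mΩ : MeasurableSpace Ω} (μ : Measure Ω) [IsProbabilityMeasure μ]
    (ℱ : ℕ → MeasurableSpace Ω) (hℱ : ∀ s, ℱ s ≤ mΩ) (hmono : Monotone ℱ)
    (T : ℕ) (G : ℕ → Ω → ℝ)
    (hGmeas : ∀ s, StronglyMeasurable[ℱ s] (G s))
    (hGL2 : ∀ s, MemLp (G s) 2 μ)
    (qhat : ℕ → Ω → ℝ) (hqhatmeas : ∀ s, StronglyMeasurable[ℱ s] (qhat s))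
    (hqhatL2 : ∀ s, MemLp (qhat s) 2 μ)
    (ε : ℕ → ℝ) (hε : ∀ s, 0 ≤ ε s)
    (hqhatT : qhat T = 0)
    (hrec : ∀ t < T,
      eLpNorm (fun ω => qhat t ω
          - (μ[fun ω' => max (G (t + 1) ω') (qhat (t + 1) ω') | ℱ t]) ω) 2 μ
        ≤ ENNReal.ofReal (ε t)) :
    ∀ t ≤ T, eLpNorm (fun ω => qhat t ω - tvrIterate μ ℱ T G t ω) 2 μ
        ≤ ENNReal.ofReal (∑ s ∈ Finset.Ico t T, ε s) := by
  have hbase : eLpNorm (fun ω => qhat T ω - tvrIterate μ ℱ T G T ω) 2 μ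
      ≤ ENNReal.ofReal (∑ s ∈ Finset.Ico T T, ε s) := by
    have h0 : (fun ω => qhat T ω - tvrIterate μ ℱ T G T ω) = fun _ => (0 : ℝ) := by
      funext ω
      rw [hqhatT, tvrIterate, dif_neg (lt_irrefl T)]
      simp
    rw [h0]
    simp [eLpNorm_zero]
  have key : ∀ n t, t ≤ T → T - t ≤ n →
      eLpNorm (fun ω => qhat t ω - tvrIterate μ ℱ T G t ω) 2 μ
        ≤ ENNReal.ofReal (∑ s ∈ Finset.Ico t T, ε s) := by
    intro n
    induction n with
    | zero =>
      intro t ht hn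
      have : t = T := by omega
      subst this; exact hbase
    | succ n ih =>
      intro t ht hn
      rcases eq_or_lt_of_le ht with rfl | h
      · exact hbase
      -- t < T
      set Mhat : Ω → ℝ := fun ω => max (G (t + 1) ω) (qhat (t + 1) ω) with hMhatdef
      set M : Ω → ℝ := fun ω => max (G (t + 1) ω) (tvrIterate μ ℱ T G (t + 1) ω) with hMdef
      have hMhatL2 : MemLp Mhat 2 μ := (hGL2 (t + 1)).sup (hqhatL2 (t + 1))
      have hML2 : MemLp M 2 μ :=
        (hGL2 (t + 1)).sup (memℒp_tvrIterate μ ℱ hℱ T G hGL2 (t + 1))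
      have htvr : tvrIterate μ ℱ T G t = μ[M|ℱ t] := by
        rw [tvrIterate, dif_pos h]
      have hsplit : (fun ω => qhat t ω - tvrIterate μ ℱ T G t ω)
          = (fun ω => qhat t ω - (μ[Mhat|ℱ t]) ω)
            + fun ω => (μ[Mhat|ℱ t]) ω - (μ[M|ℱ t]) ω := by
        funext ω; rw [htvr]; simp only [Pi.add_apply]; ring
      have hmeas1 : AEStronglyMeasurable (fun ω => qhat t ω - (μ[Mhat|ℱ t]) ω) μ :=
        (((hqhatmeas t).mono (hℱ t)).aestronglyMeasurable).sub
          ((stronglyMeasurable_condExp.mono (hℱ t)).aestronglyMeasurable)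
      have hmeas2 : AEStronglyMeasurable (fun ω => (μ[Mhat|ℱ t]) ω - (μ[M|ℱ t]) ω) μ :=
        ((stronglyMeasurable_condExp.mono (hℱ t)).aestronglyMeasurable).sub
          ((stronglyMeasurable_condExp.mono (hℱ t)).aestronglyMeasurable)
      have hterm2 : eLpNorm (fun ω => (μ[Mhat|ℱ t]) ω - (μ[M|ℱ t]) ω) 2 μ
          ≤ ENNReal.ofReal (∑ s ∈ Finset.Ico (t + 1) T, ε s) := by
        have hce : (fun ω => (μ[Mhat|ℱ t]) ω - (μ[M|ℱ t]) ω)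
            =ᵐ[μ] μ[Mhat - M|ℱ t] :=
          (condExp_sub (hMhatL2.integrable one_le_two) (hML2.integrable one_le_two) (ℱ t)).symm
        calc eLpNorm (fun ω => (μ[Mhat|ℱ t]) ω - (μ[M|ℱ t]) ω) 2 μ
            = eLpNorm (μ[Mhat - M|ℱ t]) 2 μ := eLpNorm_congr_ae hce
          _ ≤ eLpNorm (Mhat - M) 2 μ :=
              eLpNorm_two_condexp_le (hℱ t) (hMhatL2.sub hML2)
          _ ≤ eLpNorm (fun ω => qhat (t + 1) ω - tvrIterate μ ℱ T G (t + 1) ω) 2 μ := by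
              refine eLpNorm_mono fun ω => ?_
              simp only [Pi.sub_apply, hMhatdef, hMdef, Real.norm_eq_abs]
              rw [max_comm (G (t + 1) ω) (qhat (t + 1) ω),
                max_comm (G (t + 1) ω) (tvrIterate μ ℱ T G (t + 1) ω)]
              exact abs_max_sub_max_le_abs _ _ _
          _ ≤ ENNReal.ofReal (∑ s ∈ Finset.Ico (t + 1) T, ε s) :=
              ih (t + 1) (by omega) (by omega)
      calc eLpNorm (fun ω => qhat t ω - tvrIterate μ ℱ T G t ω) 2 μ
          ≤ eLpNorm (fun ω => qhat t ω - (μ[Mhat|ℱ t]) ω) 2 μ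
            + eLpNorm (fun ω => (μ[Mhat|ℱ t]) ω - (μ[M|ℱ t]) ω) 2 μ := by
            rw [hsplit]
            exact eLpNorm_add_le hmeas1 hmeas2 one_le_two
        _ ≤ ENNReal.ofReal (ε t) + ENNReal.ofReal (∑ s ∈ Finset.Ico (t + 1) T, ε s) :=
            add_le_add (hrec t h) hterm2
        _ = ENNReal.ofReal (∑ s ∈ Finset.Ico t T, ε s) := by
            rw [← ENNReal.ofReal_add (hε t) (Finset.sum_nonneg fun s _ => hε s),
              Finset.sum_eq_sum_Ico_succ_bot h]
  exact fun t ht => key (T - t) t ht le_rfl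
end
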